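/- In Lorentz–Minkowski space E₁³, a C² regular spacelike unit-speed curve α with RM frame {t, n₁, n₂} (n₁ timelike, ε₁ = −1) lies on a light-cone C²(P) = {x : ⟨x−P, x−P⟩₁ = 0} if and only if there exists a constant a₁ with 1 + a₁κ₁(s) ± a₁κ₂(s) = 0 for all s (i.e., the normal development lies on a line of the form a₁X ± a₁Y + 1 = 0). -/

import Mathlib

/-- The Lorentz–Minkowski inner product of index 1 on `ℝ³`. -/
noncomputable def mdot (x y : Fin 3 → ℝ) : ℝ := x 0 * y 0 + x 1 * y 1 - x 2 * y 2

/-- Product/derivative rule for `mdot` of two curves. -/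
lemma hasDerivAt_mdot (f g : ℝ → Fin 3 → ℝ) (f' g' : Fin 3 → ℝ) (s : ℝ)
    (hf : HasDerivAt f f' s) (hg : HasDerivAt g g' s) :
    HasDerivAt (fun x => mdot (f x) (g x)) (mdot f' (g s) + mdot (f s) g') s := by
  have h0 := ((hasDerivAt_pi.mp hf 0).mul (hasDerivAt_pi.mp hg 0))
  have h1 := ((hasDerivAt_pi.mp hf 1).mul (hasDerivAt_pi.mp hg 1))
  have h2 := ((hasDerivAt_pi.mp hf 2).mul (hasDerivAt_pi.mp hg 2))
  have := (h0.add h1).sub h2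
  exact this.congr_deriv (by simp only [mdot]; ring)

/-- A vector `mdot`-orthogonal to a pseudo-orthonormal frame vanishes. -/
lemma frame_orth_eq_zero (T N M w : Fin 3 → ℝ)
    (hTT : mdot T T = 1) (hNN : mdot N N = -1) (hMM : mdot M M = 1)
    (hTN : mdot T N = 0) (hTM : mdot T M = 0) (hNM : mdot N M = 0)
    (hwT : mdot w T = 0) (hwN : mdot w N = 0) (hwM : mdot w M = 0) : w = 0 := by
  simp only [mdot] at hTT hNN hMM hTN hTM hNM hwT hwN hwM
  set D : ℝ := T 2*N 1*M 0 + (-1)*T 2*N 0*M 1 + (-1)*T 1*N 2*M 0 + T 1*N 0*M 2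
      + T 0*N 2*M 1 + (-1)*T 0*N 1*M 2 with hDdef
  have hD : D^2 = 1 := by
    rw [hDdef]
    linear_combination (N 2*N 2*M 1*M 1 + N 2*N 2*M 0*M 0 + (-2)*N 1*N 2*M 1*M 2 + N 1*N 1*M 2*M 2 + (-1)*N 1*N 1*M 0*M 0 + (-2)*N 0*N 2*M 0*M 2 + 2*N 0*N 1*M 0*M 1 + N 0*N 0*M 2*M 2 + (-1)*N 0*N 0*M 1*M 1) * hTT + (M 2*M 2 + (-1)*M 1*M 1 + (-1)*M 0*M 0) * hNN + (1) * hMM + ((-1)*T 2*N 2*M 1*M 1 + (-1)*T 2*N 2*M 0*M 0 + T 2*N 1*M 1*M 2 + T 2*N 0*M 0*M 2 + T 1*N 2*M 1*M 2 + (-1)*T 1*N 1*M 2*M 2 + T 1*N 1*M 0*M 0 + (-1)*T 1*N 0*M 0*M 1 + T 0*N 2*M 0*M 2 + (-1)*T 0*N 1*M 0*M 1 + (-1)*T 0*N 0*M 2*M 2 + T 0*N 0*M 1*M 1) * hTN + (T 2*N 1*N 2*M 1 + (-1)*T 2*N 1*N 1*M 2 + T 2*N 0*N 2*M 0 + (-1)*T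 2*N 0*N 0*M 2 + (-1)*T 1*N 2*N 2*M 1 + T 1*N 1*N 2*M 2 + (-1)*T 1*N 0*N 1*M 0 + T 1*N 0*N 0*M 1 + (-1)*T 0*N 2*N 2*M 0 + T 0*N 1*N 1*M 0 + T 0*N 0*N 2*M 2 + (-1)*T 0*N 0*N 1*M 1) * hTM + ((-1)*N 2*M 2 + N 1*M 1 + N 0*M 0) * hNM
  have hDne : D ≠ 0 := by
    intro h; rw [h] at hD; norm_num at hD
  have e0 : D * w 0 = 0 := by
    rw [hDdef]
    linear_combination (N 2*M 1 + (-1)*N 1*M 2) * hwT + ((-1)*T 2*M 1 + T 1*M 2) * hwN + (T 2*N 1 + (-1)*T 1*N 2) * hwM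
  have e1 : D * w 1 = 0 := by
    rw [hDdef]
    linear_combination ((-1)*N 2*M 0 + N 0*M 2) * hwT + (T 2*M 0 + (-1)*T 0*M 2) * hwN + ((-1)*T 2*N 0 + T 0*N 2) * hwM
  have e2 : D * w 2 = 0 := by
    rw [hDdef]
    linear_combination ((-1)*N 1*M 0 + N 0*M 1) * hwT + (T 1*M 0 + (-1)*T 0*M 1) * hwN + ((-1)*T 1*N 0 + T 0*N 1) * hwM
  funext i
  fin_cases i
  · simpa using (mul_eq_zero.mp e0).resolve_left hDne
  · simpa using (mul_eq_zero.mp e1).resolve_left hDne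
  · simpa using (mul_eq_zero.mp e2).resolve_left hDne

/-- Converse helper: a level relation `1 + a₁κ₁ + bκ₂ = 0` with `b² = a₁²`
produces a light-cone vertex. -/
lemma cone_of_relation (α t n₁ n₂ : ℝ → Fin 3 → ℝ) (κ₁ κ₂ : ℝ → ℝ) (a₁ b : ℝ)
    (hα : ContDiff ℝ 2 α)
    (ht : ∀ s, t s = deriv α s)
    (hn₁n₁ : ∀ s, mdot (n₁ s) (n₁ s) = -1)
    (hn₂n₂ : ∀ s, mdot (n₂ s) (n₂ s) = 1)
    (hn₁n₂ : ∀ s, mdot (n₁ s) (n₂ s) = 0)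
    (hdiff₁ : Differentiable ℝ n₁) (hdiff₂ : Differentiable ℝ n₂)
    (hdn₁ : ∀ s, deriv n₁ s = -(κ₁ s) • t s)
    (hdn₂ : ∀ s, deriv n₂ s = -(κ₂ s) • t s)
    (hrel : ∀ s, 1 + a₁ * κ₁ s + b * κ₂ s = 0)
    (hb : b ^ 2 = a₁ ^ 2) :
    ∃ P : Fin 3 → ℝ, ∀ s, mdot (α s - P) (α s - P) = 0 := by
  have hαd : Differentiable ℝ α := hα.differentiable (by norm_num)
  set g : ℝ → Fin 3 → ℝ := fun s => α s - a₁ • n₁ s - b • n₂ s with hg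
  have hgd : ∀ s, HasDerivAt g 0 s := by
    intro s
    have hA : HasDerivAt α (t s) s := by
      rw [ht s]; exact (hαd s).hasDerivAt
    have hN1 : HasDerivAt n₁ (-(κ₁ s) • t s) s := by
      rw [← hdn₁ s]; exact (hdiff₁ s).hasDerivAt
    have hN2 : HasDerivAt n₂ (-(κ₂ s) • t s) s := by
      rw [← hdn₂ s]; exact (hdiff₂ s).hasDerivAt
    have := (hA.sub (hN1.const_smul a₁)).sub (hN2.const_smul b)
    have h := hrel s
    refine this.congr_deriv ?_
    funext i
    simp only [Pi.zero_apply, Pi.sub_apply, Pi.smul_apply, smul_eq_mul]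
    linear_combination (t s i) * h
  have hconst : ∀ s, g s = g 0 :=
    fun s => is_const_of_deriv_eq_zero (fun x => (hgd x).differentiableAt)
      (fun x => (hgd x).deriv) s 0
  refine ⟨g 0, fun s => ?_⟩
  have hβ : α s - g 0 = a₁ • n₁ s + b • n₂ s := by
    rw [← hconst s, hg]; funext i
    simp only [Pi.sub_apply, Pi.add_apply, Pi.smul_apply, smul_eq_mul]; ring
  rw [hβ]
  have h1 := hn₁n₁ s; have h2 := hn₂n₂ s; have h3 := hn₁n₂ s
  simp only [mdot, Pi.add_apply, Pi.smul_apply, smul_eq_mul] at h1 h2 h3 ⊢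
  linear_combination a₁^2 * h1 + b^2 * h2 + 2*a₁*b * h3 + hb

/-- In `E₁³`, a `C²` regular spacelike unit-speed curve with RM frame `{t, n₁, n₂}`
(`n₁` timelike) lies on a light-cone `C²(P)` iff there is a constant `a₁` with
`1 + a₁κ₁ ± a₁κ₂ = 0`. -/
theorem stmt10 (α t n₁ n₂ : ℝ → Fin 3 → ℝ) (κ₁ κ₂ : ℝ → ℝ)
    (hα : ContDiff ℝ 2 α)
    (ht : ∀ s, t s = deriv α s)
    (htt : ∀ s, mdot (t s) (t s) = 1)
    (hn₁n₁ : ∀ s, mdot (n₁ s) (n₁ s) = -1)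
    (hn₂n₂ : ∀ s, mdot (n₂ s) (n₂ s) = 1)
    (htn₁ : ∀ s, mdot (t s) (n₁ s) = 0)
    (htn₂ : ∀ s, mdot (t s) (n₂ s) = 0)
    (hn₁n₂ : ∀ s, mdot (n₁ s) (n₂ s) = 0)
    (hdiff₁ : Differentiable ℝ n₁) (hdiff₂ : Differentiable ℝ n₂)
    (hdt : ∀ s, deriv t s = -(κ₁ s) • n₁ s + κ₂ s • n₂ s)
    (hdn₁ : ∀ s, deriv n₁ s = -(κ₁ s) • t s)
    (hdn₂ : ∀ s, deriv n₂ s = -(κ₂ s) • t s) :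
    (∃ P : Fin 3 → ℝ, ∀ s, mdot (α s - P) (α s - P) = 0) ↔
      ∃ a₁ : ℝ,
        (∀ s, 1 + a₁ * κ₁ s + a₁ * κ₂ s = 0) ∨
        (∀ s, 1 + a₁ * κ₁ s - a₁ * κ₂ s = 0) := by
  have hαd : Differentiable ℝ α := hα.differentiable (by norm_num)
  have htd : Differentiable ℝ t := by
    have h2 : ContDiff ℝ (1+1) α := by norm_num at hα ⊢; exact hα
    have : Differentiable ℝ (deriv α) :=
      (contDiff_succ_iff_deriv.mp h2).2.2.differentiable (by norm_num)
    have hteq : t = deriv α := funext ht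
    rw [hteq]; exact this
  have hA : ∀ s, HasDerivAt α (t s) s := fun s => by
    rw [ht s]; exact (hαd s).hasDerivAt
  have hT : ∀ s, HasDerivAt t (-(κ₁ s) • n₁ s + κ₂ s • n₂ s) s := fun s => by
    rw [← hdt s]; exact (htd s).hasDerivAt
  have hN1 : ∀ s, HasDerivAt n₁ (-(κ₁ s) • t s) s := fun s => by
    rw [← hdn₁ s]; exact (hdiff₁ s).hasDerivAt
  have hN2 : ∀ s, HasDerivAt n₂ (-(κ₂ s) • t s) s := fun s => by
    rw [← hdn₂ s]; exact (hdiff₂ s).hasDerivAt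
  constructor
  · rintro ⟨P, hP⟩
    -- β := α - P ; its derivative is t
    have hB : ∀ s, HasDerivAt (fun x => α x - P) (t s) s := fun s => (hA s).sub_const P
    -- Step 1 : tangential component vanishes
    have hlam : ∀ s, mdot (α s - P) (t s) = 0 := by
      intro s
      have h1 : HasDerivAt (fun x => mdot (α x - P) (α x - P))
          (mdot (t s) (α s - P) + mdot (α s - P) (t s)) s :=
        hasDerivAt_mdot _ _ _ _ s (hB s) (hB s)
      have h2 : HasDerivAt (fun x => mdot (α x - P) (α x - P)) 0 s := by
        have : (fun x => mdot (α x - P) (α x - P)) = fun _ => (0:ℝ) := funext hP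
        rw [this]; exact hasDerivAt_const s 0
      have h3 := h1.unique h2
      have hsymm : mdot (t s) (α s - P) = mdot (α s - P) (t s) := by
        simp [mdot]; ring
      rw [hsymm] at h3; linarith
    -- Step 2 : derivative of the tangential component
    have hrel : ∀ s,
        1 - κ₁ s * mdot (α s - P) (n₁ s) + κ₂ s * mdot (α s - P) (n₂ s) = 0 := by
      intro s
      have h1 : HasDerivAt (fun x => mdot (α x - P) (t x))
          (mdot (t s) (t s) + mdot (α s - P) (-(κ₁ s) • n₁ s + κ₂ s • n₂ s)) s :=
        hasDerivAt_mdot _ _ _ _ s (hB s) (hT s)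
      have h2 : HasDerivAt (fun x => mdot (α x - P) (t x)) 0 s := by
        have : (fun x => mdot (α x - P) (t x)) = fun _ => (0:ℝ) := funext hlam
        rw [this]; exact hasDerivAt_const s 0
      have h3 := h1.unique h2
      rw [htt s] at h3
      have hexp : mdot (α s - P) (-(κ₁ s) • n₁ s + κ₂ s • n₂ s)
          = -(κ₁ s) * mdot (α s - P) (n₁ s) + κ₂ s * mdot (α s - P) (n₂ s) := by
        simp [mdot]; ring
      rw [hexp] at h3; linarith
    -- Step 3 : normal components are constant
    have hp : ∀ s, mdot (α s - P) (n₁ s) = mdot (α 0 - P) (n₁ 0) := by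
      intro s
      have hder : ∀ x, HasDerivAt (fun y => mdot (α y - P) (n₁ y)) 0 x := by
        intro x
        have h1 := hasDerivAt_mdot _ _ _ _ x (hB x) (hN1 x)
        convert h1 using 1
        have hexp : mdot (α x - P) (-(κ₁ x) • t x)
            = -(κ₁ x) * mdot (α x - P) (t x) := by simp [mdot]; ring
        rw [hexp, hlam x, htn₁ x]; ring
      exact is_const_of_deriv_eq_zero (fun x => (hder x).differentiableAt)
        (fun x => (hder x).deriv) s 0
    have hq : ∀ s, mdot (α s - P) (n₂ s) = mdot (α 0 - P) (n₂ 0) := by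
      intro s
      have hder : ∀ x, HasDerivAt (fun y => mdot (α y - P) (n₂ y)) 0 x := by
        intro x
        have h1 := hasDerivAt_mdot _ _ _ _ x (hB x) (hN2 x)
        convert h1 using 1
        have hexp : mdot (α x - P) (-(κ₂ x) • t x)
            = -(κ₂ x) * mdot (α x - P) (t x) := by simp [mdot]; ring
        rw [hexp, hlam x, htn₂ x]; ring
      exact is_const_of_deriv_eq_zero (fun x => (hder x).differentiableAt)
        (fun x => (hder x).deriv) s 0
    set p : ℝ := mdot (α 0 - P) (n₁ 0) with hpdef
    set q : ℝ := mdot (α 0 - P) (n₂ 0) with hqdef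
    -- Step 4 : p² = q² via frame decomposition at s = 0
    have hpq : p ^ 2 = q ^ 2 := by
      set w : Fin 3 → ℝ := (α 0 - P) + p • n₁ 0 - q • n₂ 0 with hw
      have hwT : mdot w (t 0) = 0 := by
        have h1 := hlam 0; have h2 := htn₁ 0; have h3 := htn₂ 0
        simp only [hw, mdot, Pi.add_apply, Pi.sub_apply, Pi.smul_apply, smul_eq_mul] at h1 h2 h3 ⊢
        linear_combination h1 + p * h2 - q * h3
      have hwN : mdot w (n₁ 0) = 0 := by
        have h1 := hp 0
        have h2 := hn₁n₁ 0; have h3 := hn₁n₂ 0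
        simp only [hw, mdot, Pi.add_apply, Pi.sub_apply, Pi.smul_apply, smul_eq_mul] at h1 h2 h3 ⊢
        linear_combination h1 + p * h2 - q * h3
      have hwM : mdot w (n₂ 0) = 0 := by
        have h1 := hq 0
        have h2 := hn₂n₂ 0; have h3 := hn₁n₂ 0
        simp only [hw, mdot, Pi.add_apply, Pi.sub_apply, Pi.smul_apply, smul_eq_mul] at h1 h2 h3 ⊢
        linear_combination h1 + p * h3 - q * h2
      have hw0 : w = 0 := frame_orth_eq_zero (t 0) (n₁ 0) (n₂ 0) w
        (htt 0) (hn₁n₁ 0) (hn₂n₂ 0) (htn₁ 0) (htn₂ 0) (hn₁n₂ 0) hwT hwN hwM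
      have hc : ∀ i, (α 0 - P) i = q * n₂ 0 i - p * n₁ 0 i := by
        intro i
        have := congrFun hw0 i
        simp only [hw, Pi.add_apply, Pi.sub_apply, Pi.smul_apply, smul_eq_mul,
          Pi.zero_apply] at this
        simp only [Pi.sub_apply]
        linarith
      have h0 := hP 0
      have h1 := hn₁n₁ 0; have h2 := hn₂n₂ 0; have h3 := hn₁n₂ 0
      simp only [mdot] at h0 h1 h2 h3
      rw [hc 0, hc 1, hc 2] at h0
      linear_combination -h0 + p^2 * h1 + q^2 * h2 - 2*p*q*h3
    -- Step 5 : conclude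
    have hrel' : ∀ s, 1 - κ₁ s * p + κ₂ s * q = 0 := by
      intro s
      have := hrel s
      rw [hp s, hq s] at this
      exact this
    have hcases : p = q ∨ p = -q := by
      have : (p - q) * (p + q) = 0 := by ring_nf; linarith [hpq]
      rcases mul_eq_zero.mp this with h | h
      · left; linarith
      · right; linarith
    refine ⟨-p, ?_⟩
    rcases hcases with h | h
    · right; intro s; have := hrel' s; rw [h] at this ⊢; linarith
    · left; intro s; have := hrel' s
      have hq' : q = -p := by linarith
      rw [hq'] at this; linarith
  · rintro ⟨a₁, h | h⟩
    · exact cone_of_relation α t n₁ n₂ κ₁ κ₂ a₁ a₁ hα ht hn₁n₁ hn₂n₂ hn₁n₂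
        hdiff₁ hdiff₂ hdn₁ hdn₂ h (by ring)
    · exact cone_of_relation α t n₁ n₂ κ₁ κ₂ a₁ (-a₁) hα ht hn₁n₁ hn₂n₂ hn₁n₂
        hdiff₁ hdiff₂ hdn₁ hdn₂ (fun s => by have := h s; linarith) (by ring)
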